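/- Let T(λ) = -B_0 + λI + B_1/(λ - α_1) + ... + B_m/(λ - α_m), where B_i ∈ M_n(ℂ) with B_0 invertible, α_i distinct nonzero complex numbers, and suppose ‖B_0⁻¹‖⁻¹ > ‖B_1‖/|α_1| + ... + ‖B_m‖/|α_m| for an operator norm ‖·‖. Let R̃ be the unique positive root of p(x) = x - ‖B_0⁻¹‖⁻¹ - ‖B_1‖/(x - |α_1|) - ... - ‖B_m‖/(x - |α_m|) with R̃ < |α_i| for all i. Then every eigenvalue λ_0 of T(λ) satisfies R̃ ≤ |λ_0|. -/

import Mathlib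

/-- For `T(λ) = -B₀ + λI + Σ Bᵢ/(λ - αᵢ)` with `B₀` invertible (with
inverse `B₀⁻¹`), nonzero distinct poles `αᵢ`, and
`‖B₀⁻¹‖⁻¹ > Σ ‖Bᵢ‖/|αᵢ|`, if `R̃` is the (unique positive) root of
`p(x) = x - ‖B₀⁻¹‖⁻¹ - Σ ‖Bᵢ‖/(x - |αᵢ|)` with `R̃ < |αᵢ|` for all `i`, then every
eigenvalue `λ₀` of `T` satisfies `R̃ ≤ |λ₀|`.  The operator norm is induced by the
vector norm on `V`. -/
theorem stmt_11 (V : Type*) [NormedAddCommGroup V] [NormedSpace ℂ V]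
    (m : ℕ) (B0 B0inv : V →L[ℂ] V)
    (hinv : B0 * B0inv = 1 ∧ B0inv * B0 = 1)
    (B : Fin m → V →L[ℂ] V)
    (α : Fin m → ℂ) (hα : Function.Injective α) (hα0 : ∀ i, α i ≠ 0)
    (hdom : ‖B0inv‖⁻¹ > ∑ i, ‖B i‖ / ‖α i‖)
    (Rt : ℝ)
    (hroot : Rt - ‖B0inv‖⁻¹ - ∑ i, ‖B i‖ / (Rt - ‖α i‖) = 0)
    (hRtlt : ∀ i, Rt < ‖α i‖)
    (lam0 : ℂ) (hpole : ∀ i, lam0 ≠ α i) (v : V) (hv : v ≠ 0)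
    (heig : (-B0 + lam0 • (1 : V →L[ℂ] V) + ∑ i, (lam0 - α i)⁻¹ • B i) v = 0) :
    Rt ≤ ‖lam0‖ := by
  by_contra hlt
  push_neg at hlt
  have hvpos : (0:ℝ) < ‖v‖ := norm_pos_iff.mpr hv
  -- rewrite the root equation
  have hsum : ∑ i, ‖B i‖ / (Rt - ‖α i‖)
      = -∑ i, ‖B i‖ / (‖α i‖ - Rt) := by
    rw [← Finset.sum_neg_distrib]
    refine Finset.sum_congr rfl fun i _ => ?_
    rw [← neg_sub Rt (‖α i‖), div_neg, neg_neg]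
  have hc : ‖B0inv‖⁻¹ = Rt + ∑ i, ‖B i‖ / (‖α i‖ - Rt) := by
    rw [hsum] at hroot; linarith
  -- eigen equation
  have h := heig
  simp only [ContinuousLinearMap.add_apply, ContinuousLinearMap.neg_apply,
    ContinuousLinearMap.smul_apply, ContinuousLinearMap.one_apply,
    ContinuousLinearMap.sum_apply] at h
  have hBv : B0 v = lam0 • v + ∑ i, (lam0 - α i)⁻¹ • (B i v) := by
    have h2 : lam0 • v + ∑ i, (lam0 - α i)⁻¹ • (B i v) - B0 v = 0 := by
      rw [← h]; abel
    exact (sub_eq_zero.mp h2).symm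
  set S : ℝ := ‖lam0‖ + ∑ i, ‖B i‖ / ‖lam0 - α i‖ with hS
  have hnorm : ‖B0 v‖ ≤ S * ‖v‖ := by
    rw [hBv]
    calc ‖lam0 • v + ∑ i, (lam0 - α i)⁻¹ • (B i v)‖
        ≤ ‖lam0 • v‖ + ‖∑ i, (lam0 - α i)⁻¹ • (B i v)‖ := norm_add_le _ _
      _ ≤ ‖lam0‖ * ‖v‖ + ∑ i, (‖B i‖ / ‖lam0 - α i‖) * ‖v‖ := by
          refine add_le_add ?_ ?_
          · exact le_of_eq (by rw [norm_smul])
          · refine (norm_sum_le _ _).trans (Finset.sum_le_sum fun i _ => ?_)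
            calc ‖(lam0 - α i)⁻¹ • (B i v)‖
                = (‖lam0 - α i‖)⁻¹ * ‖B i v‖ := by
                  rw [norm_smul, norm_inv]
              _ ≤ (‖lam0 - α i‖)⁻¹ * (‖B i‖ * ‖v‖) := by
                  have h9 : (0:ℝ) ≤ (‖lam0 - α i‖)⁻¹ := by positivity
                  exact mul_le_mul_of_nonneg_left ((B i).le_opNorm v) h9
              _ = ‖B i‖ / ‖lam0 - α i‖ * ‖v‖ := by ring
      _ = S * ‖v‖ := by rw [hS, add_mul, Finset.sum_mul]
  have hv2 : B0inv (B0 v) = v := by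
    have h3 : (B0inv * B0) v = (1 : V →L[ℂ] V) v := by rw [hinv.2]
    simpa using h3
  have hle : ‖v‖ ≤ ‖B0inv‖ * (S * ‖v‖) := by
    calc ‖v‖ = ‖B0inv (B0 v)‖ := by rw [hv2]
      _ ≤ ‖B0inv‖ * ‖B0 v‖ := B0inv.le_opNorm _
      _ ≤ ‖B0inv‖ * (S * ‖v‖) := by gcongr
  have h1S : 1 ≤ ‖B0inv‖ * S := by
    have : (1:ℝ) * ‖v‖ ≤ 1 * ‖v‖ := le_refl _
    nlinarith
  have hnpos : (0:ℝ) < ‖B0inv‖ := by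
    rw [norm_pos_iff]
    intro h0
    rw [h0] at hv2
    simp only [ContinuousLinearMap.zero_apply] at hv2
    exact hv hv2.symm
  have hcS : ‖B0inv‖⁻¹ ≤ S := by
    rw [inv_eq_one_div, div_le_iff₀ hnpos]; nlinarith
  -- final chain
  have hterm : ∑ i, ‖B i‖ / ‖lam0 - α i‖
      ≤ ∑ i, ‖B i‖ / (‖α i‖ - Rt) := by
    refine Finset.sum_le_sum fun i _ => ?_
    have h1 : ‖α i‖ - Rt ≤ ‖lam0 - α i‖ := by
      have h3 := norm_sub_norm_le (α i) lam0
      rw [norm_sub_rev] at h3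
      linarith
    have hpos : (0:ℝ) < ‖α i‖ - Rt := by linarith [hRtlt i]
    exact div_le_div_of_nonneg_left (norm_nonneg _) hpos h1
  have : S < ‖B0inv‖⁻¹ := by
    rw [hc, hS]; linarith
  linarith
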